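/- Let π : X → Y be a factor map of G-systems with X ergodic, let (F_n) be a Følner sequence for G, let 0 < ε < 10^{-6}, and let P = {P_0, P_1} be a two-cell measurable partition of X such that L := sup_n cov(μ, P, F_n, ε | π) < ∞. For y ∈ Y define C_y := { (s, t) ∈ G × G : dist_{μ_y}(T^{-s}P, T^{-t}P) < 5√ε }, where T^{-s}P denotes the partition {T^{-s}P_0, T^{-s}P_1}. Then there is a constant c > 0 depending only on ε and L (one may take c = ((1 − 2√ε)·2^{−L})²) such that for every n there exists a set Y_n ⊆ Y with ν(Y_n) ≥ 1 − ε and |C_y ∩ (F_n × F_n)| / |F_n|² ≥ c for all y ∈ Y_n. -/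

import Mathlib

open MeasureTheory Filter Set Topology
open scoped ENNReal Classical symmDiff

section SlowEntropyDefs

variable {G : Type*} [Group G]

/-- A measure-preserving action of a group `G` on a probability space. -/
structure IsMPSystem {X : Type*} [MeasurableSpace X] (T : G → X → X) (μ : Measure X) : Prop where
  prob : IsProbabilityMeasure μ
  meas : ∀ g, Measurable (T g)
  mp : ∀ g, MeasurePreserving (T g) μ μ
  mul : ∀ g g' x, T (g * g') x = T g (T g' x)
  one : ∀ x, T 1 x = x

/-- A factor map between measure-preserving `G`-systems. -/
structure IsFactorMap {X Y : Type*} [MeasurableSpace X] [MeasurableSpace Y]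
    (T : G → X → X) (μ : Measure X) (S : G → Y → Y) (ν : Measure Y) (π : X → Y) : Prop where
  meas : Measurable π
  map : μ.map π = ν
  equiv : ∀ g x, π (T g x) = S g (π x)

/-- An isomorphism of measure-preserving `G`-systems: a factor map with an a.e. two-sided
inverse factor map. -/
def IsIsomorphism {X Y : Type*} [MeasurableSpace X] [MeasurableSpace Y]
    (T : G → X → X) (μ : Measure X) (S : G → Y → Y) (ν : Measure Y) (π : X → Y) : Prop :=
  IsFactorMap T μ S ν π ∧ ∃ ρ : Y → X, IsFactorMap S ν T μ ρ ∧
    (∀ᵐ x ∂μ, ρ (π x) = x) ∧ (∀ᵐ y ∂ν, π (ρ y) = y)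

/-- `μy` is a disintegration of `μ` over the map `π : X → Y` (with `ν` the image of `μ`). -/
structure IsDisintegration {X Y : Type*} [MeasurableSpace X] [MeasurableSpace Y]
    (μ : Measure X) (ν : Measure Y) (π : X → Y) (μy : Y → Measure X) : Prop where
  prob : ∀ y, IsProbabilityMeasure (μy y)
  meas : ∀ s : Set X, MeasurableSet s → Measurable fun y => μy y s
  eq : ∀ s : Set X, MeasurableSet s → μ s = ∫⁻ y, μy y s ∂ν
  supp : ∀ᵐ y ∂ν, μy y (π ⁻¹' {y}) = 1

/-- A (left) Følner sequence for `G`: a sequence of nonempty finite subsets `F n ⊆ G` with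
`|gFₙ ∩ Fₙ| / |Fₙ| → 1` for every `g ∈ G`. -/
def IsFolner (F : ℕ → Finset G) : Prop :=
  (∀ n, (F n).Nonempty) ∧ ∀ g : G,
    Tendsto (fun n => ((((F n).image fun h => g * h) ∩ F n).card : ℝ) / ((F n).card : ℝ))
      atTop (nhds 1)

/-- The normalized Hamming distance `d_{P,F}` between the `(P,F)`-names of two points. -/
noncomputable def hamDist {X : Type*} (T : G → X → X) {r : ℕ} (P : X → Fin r)
    (F : Finset G) (x x' : X) : ℝ :=
  ((F.filter fun f => P (T f x) ≠ P (T f x')).card : ℝ) / (F.card : ℝ)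

/-- The set `E` has `d_{P,F}`-diameter at most `ε`. -/
def diamLE {X : Type*} (T : G → X → X) {r : ℕ} (P : X → Fin r) (F : Finset G)
    (E : Set X) (ε : ℝ) : Prop :=
  ∀ x ∈ E, ∀ x' ∈ E, hamDist T P F x x' ≤ ε

/-- The Hamming `ε`-covering number `cov(λ, P, F, ε)`: the smallest `M` such that there are
sets `E₁, …, E_M` of `d_{P,F}`-diameter at most `ε` whose union has `λ`-measure `≥ 1 - ε`. -/
noncomputable def hamCov {X : Type*} [MeasurableSpace X] (T : G → X → X) (lam : Measure X)
    {r : ℕ} (P : X → Fin r) (F : Finset G) (ε : ℝ) : ℕ :=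
  sInf {M : ℕ | ∃ E : Fin M → Set X, (∀ i, diamLE T P F (E i) ε) ∧
    ENNReal.ofReal (1 - ε) ≤ lam (⋃ i, E i)}

/-- The relative Hamming `ε`-covering number `cov(μ, P, F, ε | π)`, defined through the
disintegration `μy` of `μ` over `π` and the image measure `ν`: the smallest `M` such that
there exists `S ⊆ Y` with `ν S ≥ 1 - ε` and `cov(μ_y, P, F, ε) ≤ M` for every `y ∈ S`. -/
noncomputable def hamCovRel {X Y : Type*} [MeasurableSpace X] [MeasurableSpace Y]
    (T : G → X → X) (μy : Y → Measure X) (ν : Measure Y) {r : ℕ} (P : X → Fin r)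
    (F : Finset G) (ε : ℝ) : ℕ :=
  sInf {M : ℕ | ∃ S : Set Y, MeasurableSet S ∧ ENNReal.ofReal (1 - ε) ≤ ν S ∧
    ∀ y ∈ S, hamCov T (μy y) P F ε ≤ M}

/-- A rate function: an increasing positive function on `ℕ` tending to infinity. -/
def IsRateFunction (U : ℕ → ℝ) : Prop :=
  (∀ n, 0 < U n) ∧ Monotone U ∧ Tendsto U atTop atTop

/-- Relative slow entropy of a partition:
`sup_{ε>0} limsup_n cov(μ, P, F_n, ε | π) / U(|F_n|)`, valued in `[0,∞]`. -/
noncomputable def slowEntropyPartRel {X Y : Type*} [MeasurableSpace X] [MeasurableSpace Y]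
    (T : G → X → X) (μy : Y → Measure X) (ν : Measure Y) {r : ℕ} (P : X → Fin r)
    (U : ℕ → ℝ) (F : ℕ → Finset G) : ℝ≥0∞ :=
  ⨆ ε ∈ Ioi (0 : ℝ),
    Filter.limsup
      (fun n => ENNReal.ofReal ((hamCovRel T μy ν P (F n) ε : ℝ) / U (F n).card)) atTop

/-- Relative slow entropy: the supremum over all finite measurable partitions. -/
noncomputable def slowEntropyRel {X Y : Type*} [MeasurableSpace X] [MeasurableSpace Y]
    (T : G → X → X) (μy : Y → Measure X) (ν : Measure Y)
    (U : ℕ → ℝ) (F : ℕ → Finset G) : ℝ≥0∞ :=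
  ⨆ (r : ℕ) (P : X → Fin r) (_ : Measurable P), slowEntropyPartRel T μy ν P U F

/-- The partition distance `dist_λ(P, Q) = λ{x : P(x) ≠ Q(x)}` between two labeled
partitions indexed by the same set. -/
noncomputable def partDist {Z : Type*} [MeasurableSpace Z] (lam : Measure Z)
    {ι : Type*} (P Q : Z → ι) : ℝ≥0∞ :=
  lam {z | P z ≠ Q z}

/-- Ergodicity of a measure-preserving `G`-action. -/
def IsErgodicAction {X : Type*} [MeasurableSpace X] (T : G → X → X) (μ : Measure X) : Prop :=
  ∀ s : Set X, MeasurableSet s → (∀ g, T g ⁻¹' s = s) → μ s = 0 ∨ μ s = 1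

end SlowEntropyDefs



section AuxCTP
variable {G X : Type*} [Group G] [MeasurableSpace X]

lemma measurable_name_card (T : G → X → X) (hT : ∀ g, Measurable (T g))
    (P : X → Fin 2) (hP : Measurable P) (F : Finset G) (x₀ : X) :
    Measurable fun x => ((F.filter fun f => P (T f x) ≠ P (T f x₀)).card : ℝ) := by
  have h : ∀ x : X, ((F.filter fun f => P (T f x) ≠ P (T f x₀)).card : ℝ)
      = ∑ f ∈ F, if P (T f x) ≠ P (T f x₀) then (1:ℝ) else 0 := by
    intro x
    rw [Finset.card_filter]
    push_cast
    rfl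
  simp_rw [h]
  refine Finset.measurable_sum _ fun f _ => Measurable.ite ?_ measurable_const measurable_const
  have : {x | P (T f x) ≠ P (T f x₀)} = ((fun x => P (T f x)) ⁻¹' {P (T f x₀)})ᶜ := by
    ext x; simp
  exact this ▸ ((hP.comp (hT f)) (measurableSet_singleton _)).compl

lemma final_arith {N a f L : ℕ} {sq : ℝ} (hsq0 : 0 < sq) (hsmall : sq < 0.001)
    (hNpos : 0 < (N : ℝ)) (hAcard : (1 - sq) * N / 2 ^ L ≤ (a : ℝ))
    (hcard : (a : ℝ) * a ≤ (f : ℝ)) :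
    ((1 - 2 * sq) * 2 ^ (-(L : ℝ))) ^ 2 ≤ (f : ℝ) / (N : ℝ) ^ 2 := by
  have hrpow : (2 : ℝ) ^ (-(L : ℝ)) = ((2 : ℝ) ^ L)⁻¹ := by
    rw [Real.rpow_neg (by norm_num), Real.rpow_natCast]
  have h2L : (0:ℝ) < 2 ^ L := by positivity
  have hbase : 0 ≤ (1 - 2 * sq) * 2 ^ (-(L : ℝ)) := by
    rw [hrpow]
    have h1 : 0 ≤ 1 - 2 * sq := by linarith
    positivity
  have hstep : (1 - 2 * sq) * 2 ^ (-(L : ℝ)) ≤ (a : ℝ) / N := by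
    rw [hrpow, le_div_iff₀ hNpos]
    have h2 : (1 - 2 * sq) * ((2:ℝ) ^ L)⁻¹ * N ≤ (1 - sq) * N / 2 ^ L := by
      rw [div_eq_mul_inv]
      have h3 := mul_le_mul_of_nonneg_right
        (by linarith : (1 - 2 * sq) ≤ 1 - sq)
        (by positivity : (0:ℝ) ≤ ((2:ℝ) ^ L)⁻¹ * N)
      calc (1 - 2 * sq) * ((2:ℝ) ^ L)⁻¹ * N = (1 - 2 * sq) * (((2:ℝ) ^ L)⁻¹ * N) := by ring
        _ ≤ (1 - sq) * (((2:ℝ) ^ L)⁻¹ * N) := h3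
        _ = (1 - sq) * N * ((2:ℝ) ^ L)⁻¹ := by ring
    linarith
  calc ((1 - 2 * sq) * 2 ^ (-(L : ℝ))) ^ 2 ≤ ((a : ℝ) / N) ^ 2 :=
        pow_le_pow_left₀ hbase hstep 2
    _ = ((a : ℝ) * a) / (N : ℝ) ^ 2 := by ring
    _ ≤ _ := by gcongr

set_option maxHeartbeats 1000000 in
lemma core_bound (T : G → X → X) (hT : ∀ g, Measurable (T g))
    (μ : Measure X) [IsProbabilityMeasure μ]
    (P : X → Fin 2) (hP : Measurable P)
    (F : Finset G) (hFne : F.Nonempty)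
    {ε : ℝ} (hε0 : 0 < ε) (hε1 : ε < 10 ^ (-(6 : ℤ)))
    (L M₀ : ℕ) (hM₀L : M₀ ≤ L)
    (E : Fin M₀ → Set X) (hdiam : ∀ i, diamLE T P F (E i) ε)
    (hcov : ENNReal.ofReal (1 - ε) ≤ μ (⋃ i, E i)) :
    ((1 - 2 * Real.sqrt ε) * 2 ^ (-(L : ℝ))) ^ 2 ≤
      (((F ×ˢ F).filter fun st : G × G =>
          partDist μ (fun x => P (T st.1 x)) (fun x => P (T st.2 x)) <
            ENNReal.ofReal (5 * Real.sqrt ε)).card : ℝ) / (F.card : ℝ) ^ 2 := by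
  classical
  have hXne : Nonempty X := by
    by_contra h
    rw [not_nonempty_iff] at h
    have h1 : μ univ = 1 := measure_univ
    rw [Set.univ_eq_empty_iff.mpr h, measure_empty] at h1
    exact zero_ne_one h1
  set N : ℕ := F.card with hN
  have hNpos : 0 < (N : ℝ) := by exact_mod_cast Finset.card_pos.mpr hFne
  set sq : ℝ := Real.sqrt ε with hsqdef
  have hsq0 : 0 < sq := Real.sqrt_pos.mpr hε0
  have hsqsq : sq ^ 2 = ε := Real.sq_sqrt hε0.le
  have hsqlt : sq < 10 ^ (-(3:ℤ)) := by
    rw [hsqdef]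
    rw [Real.sqrt_lt' (by norm_num : (0:ℝ) < 10 ^ (-(3:ℤ)))]
    calc ε < 10 ^ (-(6:ℤ)) := hε1
      _ = ((10:ℝ) ^ (-(3:ℤ))) ^ 2 := by norm_num
  have hsmall : sq < 0.001 := by
    have h10 : ((10:ℝ) ^ (-(3:ℤ))) = 0.001 := by norm_num
    rw [h10] at hsqlt
    exact hsqlt
  have hεsq : ε ≤ sq := by nlinarith
  -- reference points and Hamming balls
  set E' : ℕ → Set X := fun k => if h : k < M₀ then E ⟨k, h⟩ else ∅ with hE'
  set r : ℕ → X := fun k => if h : (E' k).Nonempty then h.choose else Classical.arbitrary X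
    with hr
  set Ball : ℕ → Set X := fun k =>
    if k < M₀ then {x | hamDist T P F x (r k) ≤ ε} else ∅ with hBall
  have hBallMeas : ∀ k, MeasurableSet (Ball k) := by
    intro k
    by_cases h : k < M₀
    · simp only [hBall, if_pos h]
      have hm : Measurable fun x => hamDist T P F x (r k) :=
        (measurable_name_card T hT P hP F (r k)).div_const _
      exact hm measurableSet_Iic
    · simp only [hBall, if_neg h]
      exact MeasurableSet.empty
  have hE'B : ∀ k, E' k ⊆ Ball k := by
    intro k x hx
    have hk : k < M₀ := by
      by_contra h
      rw [hE'] at hx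
      simp only [dif_neg h] at hx
      exact hx
    have hne : (E' k).Nonempty := ⟨x, hx⟩
    have hrk : r k ∈ E' k := by
      rw [hr]
      simp only [dif_pos hne]
      exact hne.choose_spec
    simp only [hBall, if_pos hk, mem_setOf_eq]
    have hx' : x ∈ E ⟨k, hk⟩ := by rw [hE'] at hx; simpa [dif_pos hk] using hx
    have hr' : r k ∈ E ⟨k, hk⟩ := by rw [hE'] at hrk; simpa [dif_pos hk] using hrk
    exact hdiam ⟨k, hk⟩ x hx' (r k) hr'
  have hBallCard : ∀ k, ∀ x ∈ Ball k,
      ((F.filter fun f => P (T f x) ≠ P (T f (r k))).card : ℝ) ≤ ε * N := by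
    intro k x hx
    have hk : k < M₀ := by
      by_contra h
      simp only [hBall, if_neg h] at hx
      exact hx
    simp only [hBall, if_pos hk, mem_setOf_eq] at hx
    unfold hamDist at hx
    rw [div_le_iff₀ hNpos] at hx
    linarith
  -- disjointify
  set D : ℕ → Set X := disjointed Ball with hD
  have hDmeas : ∀ k, MeasurableSet (D k) := MeasurableSet.disjointed hBallMeas
  have hDsub : ∀ k, D k ⊆ Ball k := disjointed_subset Ball
  -- the error sets
  set Ham : ℕ → G → Set X := fun k s => D k ∩ {x | P (T s x) ≠ P (T s (r k))} with hHam
  have hHamMeas : ∀ k s, MeasurableSet (Ham k s) := by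
    intro k s
    refine (hDmeas k).inter ?_
    have : {x | P (T s x) ≠ P (T s (r k))} = ((fun x => P (T s x)) ⁻¹' {P (T s (r k))})ᶜ := by
      ext x; simp
    exact this ▸ ((hP.comp (hT s)) (measurableSet_singleton _)).compl
  set e : ℕ → G → ℝ≥0∞ := fun k s => μ (Ham k s) with he
  -- Step I
  have keyI : ∀ k, ∑ s ∈ F, e k s ≤ ENNReal.ofReal ε * N * μ (D k) := by
    intro k
    calc ∑ s ∈ F, e k s
        = ∑ s ∈ F, ∫⁻ x, (Ham k s).indicator 1 x ∂μ :=
          Finset.sum_congr rfl fun s _ => (lintegral_indicator_one (hHamMeas k s)).symm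
      _ = ∫⁻ x, ∑ s ∈ F, (Ham k s).indicator 1 x ∂μ :=
          (lintegral_finset_sum _ fun s _ =>
            (measurable_one.indicator (hHamMeas k s))).symm
      _ ≤ ∫⁻ x, (D k).indicator (fun _ => ENNReal.ofReal ε * N) x ∂μ := by
          apply lintegral_mono
          intro x
          show ∑ s ∈ F, (Ham k s).indicator (1 : X → ℝ≥0∞) x ≤
            (D k).indicator (fun _ => ENNReal.ofReal ε * N) x
          by_cases hx : x ∈ D k
          · have hcount : ∑ s ∈ F, (Ham k s).indicator (1 : X → ℝ≥0∞) x
                = ((F.filter fun s => P (T s x) ≠ P (T s (r k))).card : ℝ≥0∞) := by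
              rw [← Finset.sum_boole]
              refine Finset.sum_congr rfl fun s _ => ?_
              rw [Set.indicator_apply]
              by_cases hxs : P (T s x) ≠ P (T s (r k))
              · rw [if_pos hxs, if_pos ⟨hx, hxs⟩]
                rfl
              · rw [if_neg hxs, if_neg (fun hmem => hxs hmem.2)]
            rw [hcount, Set.indicator_of_mem hx]
            have hle := hBallCard k x (hDsub k hx)
            calc ((F.filter fun s => P (T s x) ≠ P (T s (r k))).card : ℝ≥0∞)
                = ENNReal.ofReal ((F.filter fun s => P (T s x) ≠ P (T s (r k))).card : ℝ) :=
                  (ENNReal.ofReal_natCast _).symm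
              _ ≤ ENNReal.ofReal (ε * N) := ENNReal.ofReal_le_ofReal hle
              _ = ENNReal.ofReal ε * N := by
                  rw [ENNReal.ofReal_mul hε0.le, ENNReal.ofReal_natCast]
          · have hz : ∀ s ∈ F, (Ham k s).indicator (1 : X → ℝ≥0∞) x = 0 := by
              intro s _
              exact Set.indicator_of_notMem (fun hmem => hx hmem.1) _
            rw [Finset.sum_congr rfl hz, Finset.sum_const, smul_zero,
              Set.indicator_of_notMem hx]
      _ = ENNReal.ofReal ε * N * μ (D k) := lintegral_indicator_const (hDmeas k) _
  -- Step II
  set m : G → ℝ≥0∞ := fun s => ∑ k ∈ Finset.range M₀, e k s with hm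
  have hDsum : ∑ k ∈ Finset.range M₀, μ (D k) ≤ 1 := by
    rw [← measure_biUnion_finset ((disjoint_disjointed Ball).set_pairwise _)
      (fun k _ => hDmeas k)]
    exact (measure_mono (subset_univ _)).trans measure_univ.le
  have keyII : ∑ s ∈ F, m s ≤ ENNReal.ofReal (ε * N) := by
    calc ∑ s ∈ F, m s = ∑ k ∈ Finset.range M₀, ∑ s ∈ F, e k s := Finset.sum_comm
      _ ≤ ∑ k ∈ Finset.range M₀, ENNReal.ofReal ε * N * μ (D k) :=
          Finset.sum_le_sum fun k _ => keyI k
      _ = ENNReal.ofReal ε * N * ∑ k ∈ Finset.range M₀, μ (D k) := by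
          rw [Finset.mul_sum]
      _ ≤ ENNReal.ofReal ε * N * 1 := by gcongr
      _ = ENNReal.ofReal (ε * N) := by
          rw [mul_one, ENNReal.ofReal_mul hε0.le, ENNReal.ofReal_natCast]
  -- Step III: bad set
  set Bad : Finset G := F.filter (fun s => ENNReal.ofReal sq < m s) with hBadDef
  have hBadcard : (Bad.card : ℝ) ≤ sq * N := by
    have h1 : (Bad.card : ℝ≥0∞) * ENNReal.ofReal sq ≤ ENNReal.ofReal (ε * N) := by
      calc (Bad.card : ℝ≥0∞) * ENNReal.ofReal sq = ∑ _s ∈ Bad, ENNReal.ofReal sq := by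
            rw [Finset.sum_const, nsmul_eq_mul]
        _ ≤ ∑ s ∈ Bad, m s :=
            Finset.sum_le_sum fun s hs => (Finset.mem_filter.mp hs).2.le
        _ ≤ ∑ s ∈ F, m s :=
            Finset.sum_le_sum_of_subset (Finset.filter_subset _ _)
        _ ≤ ENNReal.ofReal (ε * N) := keyII
    have h3 : ENNReal.ofReal ((Bad.card : ℝ) * sq) ≤ ENNReal.ofReal (ε * N) := by
      rw [ENNReal.ofReal_mul (Nat.cast_nonneg Bad.card), ENNReal.ofReal_natCast]
      exact h1
    have h4 : (Bad.card : ℝ) * sq ≤ ε * N :=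
      (ENNReal.ofReal_le_ofReal_iff (mul_nonneg hε0.le (Nat.cast_nonneg N))).mp h3
    nlinarith
  -- Step IV: good set
  set Good : Finset G := F \ Bad with hGoodDef
  have hGoodF : Good ⊆ F := Finset.sdiff_subset
  have hGoodcard : (1 - sq) * N ≤ (Good.card : ℝ) := by
    have hcs : Good.card = F.card - Bad.card :=
      Finset.card_sdiff_of_subset (Finset.filter_subset _ _)
    have hb : Bad.card ≤ F.card := Finset.card_le_card (Finset.filter_subset _ _)
    rw [hcs]
    rw [Nat.cast_sub hb]
    rw [← hN]
    linarith
  have hGoodm : ∀ s ∈ Good, m s ≤ ENNReal.ofReal sq := by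
    intro s hs
    have h2 := (Finset.mem_sdiff.mp hs).2
    rw [hBadDef, Finset.mem_filter] at h2
    push_neg at h2
    exact h2 ((Finset.mem_sdiff.mp hs).1)
  -- Step V: pigeonhole on colors
  set col : G → (Fin M₀ → Fin 2) := fun s i => P (T s (r i)) with hcol
  obtain ⟨v, hv⟩ : ∃ v : Fin M₀ → Fin 2,
      (Good.card : ℝ) / 2 ^ M₀ ≤ ((Good.filter fun s => col s = v).card : ℝ) := by
    by_contra hcon
    push_neg at hcon
    have hsum : ∑ v : Fin M₀ → Fin 2, ((Good.filter fun s => col s = v).card : ℝ)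
        = Good.card := by
      rw [← Nat.cast_sum]
      congr 1
      exact (Finset.card_eq_sum_card_fiberwise fun s _ => Finset.mem_univ (col s)).symm
    have hlt : (Good.card : ℝ) < Good.card := by
      calc (Good.card : ℝ)
          = ∑ v : Fin M₀ → Fin 2, ((Good.filter fun s => col s = v).card : ℝ) := hsum.symm
        _ < ∑ _v : Fin M₀ → Fin 2, (Good.card : ℝ) / 2 ^ M₀ :=
            Finset.sum_lt_sum_of_nonempty Finset.univ_nonempty fun v _ => hcon v
        _ = (Fintype.card (Fin M₀ → Fin 2) : ℝ) * ((Good.card : ℝ) / 2 ^ M₀) := by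
            rw [Finset.sum_const, nsmul_eq_mul]
            rfl
        _ = (Good.card : ℝ) := by
            rw [Fintype.card_fun]
            simp only [Fintype.card_fin]
            field_simp
            push_cast; ring
    exact lt_irrefl _ hlt
  set A : Finset G := Good.filter fun s => col s = v with hA
  have hAcard : (1 - sq) * N / 2 ^ L ≤ (A.card : ℝ) := by
    refine le_trans ?_ hv
    rw [div_le_div_iff₀ (by positivity) (by positivity)]
    have h2 : (2:ℝ) ^ M₀ ≤ 2 ^ L := pow_le_pow_right₀ (by norm_num) hM₀L
    have h3 : (0:ℝ) ≤ (1 - sq) * N := by nlinarith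
    exact mul_le_mul hGoodcard h2 (by positivity) (Nat.cast_nonneg _)
  -- Step VI: all pairs in A are close
  have hclose : ∀ s ∈ A, ∀ t ∈ A,
      partDist μ (fun x => P (T s x)) (fun x => P (T t x)) < ENNReal.ofReal (5 * sq) := by
    intro s hs t ht
    obtain ⟨hsG, hsv⟩ := Finset.mem_filter.mp hs
    obtain ⟨htG, htv⟩ := Finset.mem_filter.mp ht
    have hsub : {x | P (T s x) ≠ P (T t x)} ⊆
        (⋃ k, Ball k)ᶜ ∪ ⋃ k ∈ Finset.range M₀, (Ham k s ∪ Ham k t) := by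
      intro x hx
      by_cases hxU : x ∈ ⋃ k, Ball k
      · right
        rw [← iUnion_disjointed] at hxU
        obtain ⟨k, hxk⟩ := mem_iUnion.mp hxU
        have hk : k < M₀ := by
          by_contra h
          have hxB := hDsub k hxk
          simp only [hBall, if_neg h] at hxB
          exact hxB
        refine mem_biUnion (Finset.mem_range.mpr hk) ?_
        by_contra hno
        simp only [Set.mem_union, hHam, Set.mem_inter_iff, mem_setOf_eq, not_or,
          not_and] at hno
        have h1 : P (T s x) = P (T s (r k)) := not_not.mp (hno.1 hxk)
        have h2 : P (T t x) = P (T t (r k)) := not_not.mp (hno.2 hxk)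
        have hcolEq : P (T s (r k)) = P (T t (r k)) := by
          have hst : col s = col t := hsv.trans htv.symm
          exact congrFun hst ⟨k, hk⟩
        exact hx (h1.trans (hcolEq.trans h2.symm))
      · left; exact hxU
    have hμU : ENNReal.ofReal (1 - ε) ≤ μ (⋃ k, Ball k) := by
      refine le_trans hcov (measure_mono ?_)
      intro x hx
      obtain ⟨i, hi⟩ := mem_iUnion.mp hx
      refine mem_iUnion.mpr ⟨i.val, hE'B i.val ?_⟩
      rw [hE']
      simp only [dif_pos i.isLt]
      simpa using hi
    have hcompl : μ ((⋃ k, Ball k)ᶜ) ≤ ENNReal.ofReal ε := by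
      rw [measure_compl (MeasurableSet.iUnion hBallMeas) (measure_ne_top μ _),
        measure_univ]
      calc (1 : ℝ≥0∞) - μ (⋃ k, Ball k) ≤ 1 - ENNReal.ofReal (1 - ε) :=
            tsub_le_tsub_left hμU 1
        _ = ENNReal.ofReal ε := by
            rw [← ENNReal.ofReal_one, ← ENNReal.ofReal_sub _ (by linarith : (0:ℝ) ≤ 1 - ε)]
            norm_num
    calc partDist μ (fun x => P (T s x)) (fun x => P (T t x))
        = μ {x | P (T s x) ≠ P (T t x)} := rfl
      _ ≤ μ ((⋃ k, Ball k)ᶜ ∪ ⋃ k ∈ Finset.range M₀, (Ham k s ∪ Ham k t)) :=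
          measure_mono hsub
      _ ≤ μ ((⋃ k, Ball k)ᶜ) + μ (⋃ k ∈ Finset.range M₀, (Ham k s ∪ Ham k t)) :=
          measure_union_le _ _
      _ ≤ ENNReal.ofReal ε + ∑ k ∈ Finset.range M₀, μ (Ham k s ∪ Ham k t) := by
          gcongr
          exact measure_biUnion_finset_le _ _
      _ ≤ ENNReal.ofReal ε + ∑ k ∈ Finset.range M₀, (e k s + e k t) := by
          gcongr with k hk
          exact (measure_union_le _ _)
      _ = ENNReal.ofReal ε + (m s + m t) := by rw [Finset.sum_add_distrib]
      _ ≤ ENNReal.ofReal ε + (ENNReal.ofReal sq + ENNReal.ofReal sq) := by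
          gcongr
          · exact hGoodm s hsG
          · exact hGoodm t htG
      _ = ENNReal.ofReal (ε + (sq + sq)) := by
          rw [← ENNReal.ofReal_add hsq0.le hsq0.le,
            ← ENNReal.ofReal_add hε0.le (by positivity)]
      _ < ENNReal.ofReal (5 * sq) := by
          rw [ENNReal.ofReal_lt_ofReal_iff (by positivity)]
          nlinarith
  -- Step VII: count pairs
  have hsubset : A ×ˢ A ⊆ (F ×ˢ F).filter fun st : G × G =>
      partDist μ (fun x => P (T st.1 x)) (fun x => P (T st.2 x)) <
        ENNReal.ofReal (5 * sq) := by
    intro st hst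
    obtain ⟨h1, h2⟩ := Finset.mem_product.mp hst
    refine Finset.mem_filter.mpr ⟨Finset.mem_product.mpr
      ⟨hGoodF (Finset.filter_subset _ _ h1), hGoodF (Finset.filter_subset _ _ h2)⟩, ?_⟩
    exact hclose st.1 h1 st.2 h2
  have hcardle : (A.card : ℝ) * A.card ≤ (((F ×ˢ F).filter fun st : G × G =>
      partDist μ (fun x => P (T st.1 x)) (fun x => P (T st.2 x)) <
        ENNReal.ofReal (5 * sq)).card : ℝ) := by
    have h := Finset.card_le_card hsubset
    rw [Finset.card_product] at h
    exact_mod_cast h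
  exact final_arith hsq0 hsmall hNpos hAcard hcardle
lemma names_mem_hamCovSet (T : G → X → X) (lam : Measure X) [IsProbabilityMeasure lam]
    (P : X → Fin 2) (F : Finset G) {ε : ℝ} (hε : 0 ≤ ε) :
    (2 ^ F.card) ∈ {M : ℕ | ∃ E : Fin M → Set X, (∀ i, diamLE T P F (E i) ε) ∧
      ENNReal.ofReal (1 - ε) ≤ lam (⋃ i, E i)} := by
  classical
  refine ⟨fun i => {x | finFunctionFinEquiv
      (fun k : Fin F.card => P (T (F.equivFin.symm k : G) x)) = i}, ?_, ?_⟩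
  · intro i x hx x' hx'
    have hname : ∀ f ∈ F, P (T f x) = P (T f x') := by
      intro f hf
      have heq := finFunctionFinEquiv.injective
        ((hx : _ = i).trans (hx' : _ = i).symm)
      have h2 := congrFun heq (F.equivFin ⟨f, hf⟩)
      simpa using h2
    have hz : (F.filter fun f => P (T f x) ≠ P (T f x')).card = 0 := by
      rw [Finset.card_eq_zero, Finset.filter_eq_empty_iff]
      intro f hf
      simpa using hname f hf
    unfold hamDist
    rw [hz]
    simpa using hε
  · have huniv : (⋃ i, {x | finFunctionFinEquiv
        (fun k : Fin F.card => P (T (F.equivFin.symm k : G) x)) = i}) = univ := by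
      ext x
      simp only [mem_iUnion, mem_setOf_eq, mem_univ, iff_true]
      exact ⟨_, rfl⟩
    rw [huniv, measure_univ]
    exact ENNReal.ofReal_le_one.mpr (by linarith)


lemma hamCov_mem (T : G → X → X) (lam : Measure X) [IsProbabilityMeasure lam]
    (P : X → Fin 2) (F : Finset G) {ε : ℝ} (hε : 0 ≤ ε) :
    ∃ E : Fin (hamCov T lam P F ε) → Set X, (∀ i, diamLE T P F (E i) ε) ∧
      ENNReal.ofReal (1 - ε) ≤ lam (⋃ i, E i) :=
  Nat.sInf_mem (⟨_, names_mem_hamCovSet T lam P F hε⟩ :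
    {M : ℕ | ∃ E : Fin M → Set X, (∀ i, diamLE T P F (E i) ε) ∧
      ENNReal.ofReal (1 - ε) ≤ lam (⋃ i, E i)}.Nonempty)

end AuxCTP

/-- Lemma `CloseTogetherPartition`.
Let `X` be ergodic, `π : X → Y` an extension, `(F_n)` a Følner sequence, `0 < ε < 10⁻⁶`,
and `P = {P_0, P_1}` a two-cell partition with `cov(μ, P, F_n, ε | π) ≤ L` for all `n`.
With `C_y = {(s,t) : dist_{μ_y}(T⁻ˢP, T⁻ᵗP) < 5√ε}`, there is a constant
`c = ((1 − 2√ε)·2^{−L})² > 0` such that for every `n` there is `Y_n ⊆ Y` with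
`ν(Y_n) ≥ 1 − ε` and `|C_y ∩ F_n²|/|F_n|² ≥ c` for all `y ∈ Y_n`. -/
theorem close_together_partition
    {G X Y : Type*} [Group G] [Countable G]
    [MeasurableSpace X] [MeasurableSpace Y] [StandardBorelSpace X] [StandardBorelSpace Y]
    (T : G → X → X) (μ : Measure X) (S : G → Y → Y) (ν : Measure Y)
    (hX : IsMPSystem T μ) (hY : IsMPSystem S ν) (hErg : IsErgodicAction T μ)
    (π : X → Y) (hπ : IsFactorMap T μ S ν π)
    (μy : Y → Measure X) (hdis : IsDisintegration μ ν π μy)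
    (F : ℕ → Finset G) (hF : IsFolner F)
    (ε : ℝ) (hε0 : 0 < ε) (hε1 : ε < 10 ^ (-(6 : ℤ)))
    (P : X → Fin 2) (hP : Measurable P)
    (L : ℕ) (hL : ∀ n, hamCovRel T μy ν P (F n) ε ≤ L) :
    ∃ c : ℝ, c = ((1 - 2 * Real.sqrt ε) * 2 ^ (-(L : ℝ))) ^ 2 ∧ 0 < c ∧
      ∀ n, ∃ Yn : Set Y, ENNReal.ofReal (1 - ε) ≤ ν Yn ∧
        ∀ y ∈ Yn,
          c ≤ (((F n ×ˢ F n).filter fun st : G × G =>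
              partDist (μy y) (fun x => P (T st.1 x)) (fun x => P (T st.2 x)) <
                ENNReal.ofReal (5 * Real.sqrt ε)).card : ℝ) / ((F n).card : ℝ) ^ 2 := by
  
  classical
  haveI := hX.prob
  haveI := hY.prob
  have hε1' : ε < 1 := lt_trans hε1 (by norm_num)
  refine ⟨_, rfl, ?_, ?_⟩
  · have hsqlt : Real.sqrt ε < 10 ^ (-(3:ℤ)) := by
      rw [Real.sqrt_lt' (by norm_num : (0:ℝ) < 10 ^ (-(3:ℤ)))]
      calc ε < 10 ^ (-(6:ℤ)) := hε1
        _ = ((10:ℝ) ^ (-(3:ℤ))) ^ 2 := by norm_num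
    have h10 : ((10:ℝ) ^ (-(3:ℤ))) = 0.001 := by norm_num
    rw [h10] at hsqlt
    have h1 : 0 < 1 - 2 * Real.sqrt ε := by linarith
    have h2 : (0:ℝ) < 2 ^ (-(L : ℝ)) := Real.rpow_pos_of_pos (by norm_num) _
    positivity
  · intro n
    haveI : ∀ y, IsProbabilityMeasure (μy y) := hdis.prob
    have hmem : hamCovRel T μy ν P (F n) ε ∈
        {M : ℕ | ∃ S : Set Y, MeasurableSet S ∧ ENNReal.ofReal (1 - ε) ≤ ν S ∧
          ∀ y ∈ S, hamCov T (μy y) P (F n) ε ≤ M} := by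
      refine Nat.sInf_mem ⟨2 ^ (F n).card, Set.univ, MeasurableSet.univ, ?_, ?_⟩
      · rw [measure_univ]
        exact ENNReal.ofReal_le_one.mpr (by linarith)
      · intro y _
        exact Nat.sInf_le (names_mem_hamCovSet T (μy y) P (F n) hε0.le)
    obtain ⟨S, _hSmeas, hSν, hScov⟩ := hmem
    refine ⟨S, hSν, ?_⟩
    intro y hy
    have hcovy : hamCov T (μy y) P (F n) ε ≤ L := le_trans (hScov y hy) (hL n)
    obtain ⟨E, hdiam, hcover⟩ := hamCov_mem T (μy y) P (F n) hε0.le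
    exact core_bound T hX.meas (μy y) P hP (F n) (hF.1 n) hε0 hε1 L _ hcovy E hdiam hcover
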